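/- arXiv:1704.01866 — 2 statements merged into one kernel-verified Lean document; each statement's English description precedes it below -/
import Mathlib

section
/- Minimal-set property: for any intuitionistic Kripke model M = ⟨W,R,V⟩ in which R is well-founded (every nonempty subset of W contains an R-minimal element), any team t, and any formula φ of L: M,t ⊨ φ if and only if M,min(t) ⊨ φ, where min(t) = {w ∈ t | for all v ∈ t, vRw implies v = w}. -/
/-- Formulas of the language L: atoms, ⊥, ∧, ∨, →, and inquisitive disjunction ⩾. -/
inductive Formula (P : Type) : Type
  | atom : P → Formula P
  | bot  : Formula P
  | and  : Formula P → Formula P → Formula P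
  | or   : Formula P → Formula P → Formula P
  | impl : Formula P → Formula P → Formula P
  | iorr : Formula P → Formula P → Formula P

namespace Formula

/-- Negation ¬φ := φ → ⊥. -/
def neg {P : Type} (φ : Formula P) : Formula P := Formula.impl φ Formula.bot

/-- Polar question ?φ := φ ⩾ ¬φ. -/
def question {P : Type} (φ : Formula P) : Formula P := Formula.iorr φ φ.neg

/-- A standard formula contains no occurrence of inquisitive disjunction ⩾. -/
def standard {P : Type} : Formula P → Prop
  | atom _ => True
  | bot => True
  | and φ ψ => φ.standard ∧ ψ.standard
  | or φ ψ => φ.standard ∧ ψ.standard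
  | impl φ ψ => φ.standard ∧ ψ.standard
  | iorr _ _ => False

end Formula

/-- An intuitionistic Kripke model: a partially ordered set of worlds with a
persistent valuation. -/
structure KripkeModel (P : Type) where
  W : Type
  R : W → W → Prop
  refl : ∀ w, R w w
  antisymm : ∀ w v, R w v → R v w → w = v
  trans : ∀ w v u, R w v → R v u → R w u
  V : W → P → Prop
  persistent : ∀ w v p, R w v → V w p → V v p

/-- R[t], the up-set generated by a team t. -/
def KripkeModel.upset {P : Type} (M : KripkeModel P) (t : Set M.W) : Set M.W :=
  {v | ∃ w ∈ t, M.R w v}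

/-- The support relation M,t ⊨ φ between teams and formulas. -/
def support {P : Type} (M : KripkeModel P) : Formula P → Set M.W → Prop
  | .atom p, t => ∀ w ∈ t, M.V w p
  | .bot, t => t = ∅
  | .and φ ψ, t => support M φ t ∧ support M ψ t
  | .or φ ψ, t => ∃ t₁ t₂, t = t₁ ∪ t₂ ∧ support M φ t₁ ∧ support M ψ t₂
  | .impl φ ψ, t => ∀ t', t' ⊆ M.upset t → support M φ t' → support M ψ t'
  | .iorr φ ψ, t => support M φ t ∨ support M ψ t

/-- Truth at a world: M,w ⊨ φ iff M,{w} ⊨ φ. -/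
def truth {P : Type} (M : KripkeModel P) (w : M.W) (φ : Formula P) : Prop :=
  support M φ {w}

/-- A formula is truth-conditional if support at a team amounts to truth at each world. -/
def truthConditional {P : Type} (φ : Formula P) : Prop :=
  ∀ (M : KripkeModel P) (t : Set M.W), support M φ t ↔ ∀ w ∈ t, truth M w φ

/-- The partial truth-value function: `tvalIs M w φ b` says T(w,φ) is defined with value b
(b = true for value 1, i.e. M,w ⊨ φ; b = false for value 0, i.e. M,w ⊨ ¬φ). -/
def tvalIs {P : Type} (M : KripkeModel P) (w : M.W) (φ : Formula P) : Bool → Prop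
  | true => truth M w φ
  | false => truth M w φ.neg

def mins {P : Type} (M : KripkeModel P) (t : Set M.W) : Set M.W :=
  {w | w ∈ t ∧ ∀ v ∈ t, M.R v w → v = w}

theorem mins_subset {P : Type} (M : KripkeModel P) (t : Set M.W) : mins M t ⊆ t :=
  fun _ h => h.1

theorem upset_mono {P : Type} (M : KripkeModel P) {s t : Set M.W} (h : s ⊆ t) :
    M.upset s ⊆ M.upset t := by
  rintro v ⟨w, hw, hr⟩; exact ⟨w, h hw, hr⟩

theorem support_mono {P : Type} (M : KripkeModel P) (φ : Formula P) :
    ∀ t s : Set M.W, s ⊆ t → support M φ t → support M φ s := by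
  induction φ with
  | atom p => intro t s hs h w hw; exact h w (hs hw)
  | bot => intro t s hs h; subst h; exact Set.subset_empty_iff.mp hs
  | and φ ψ ihφ ihψ => intro t s hs h; exact ⟨ihφ t s hs h.1, ihψ t s hs h.2⟩
  | or φ ψ ihφ ihψ =>
      rintro t s hs ⟨t₁, t₂, rfl, h1, h2⟩
      refine ⟨s ∩ t₁, s ∩ t₂, ?_, ihφ t₁ _ Set.inter_subset_right h1,
        ihψ t₂ _ Set.inter_subset_right h2⟩
      rw [← Set.inter_union_distrib_left, Set.inter_eq_left.mpr hs]
  | impl φ ψ ihφ ihψ =>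
      intro t s hs h t' ht' hφ
      exact h t' (ht'.trans (upset_mono M hs)) hφ
  | iorr φ ψ ihφ ihψ =>
      intro t s hs h; exact h.imp (ihφ t s hs) (ihψ t s hs)

theorem cover {P : Type} (M : KripkeModel P)
    (hwf : ∀ s : Set M.W, s.Nonempty → ∃ w ∈ s, ∀ v ∈ s, M.R v w → v = w)
    (t : Set M.W) : ∀ w ∈ t, ∃ m ∈ mins M t, M.R m w := by
  intro w hw
  obtain ⟨m, ⟨hmt, hmw⟩, hmin⟩ := hwf {v | v ∈ t ∧ M.R v w} ⟨w, hw, M.refl w⟩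
  refine ⟨m, ⟨hmt, fun v hv hr => hmin v ⟨hv, M.trans v m w hr hmw⟩ hr⟩, hmw⟩

theorem subset_upset_mins {P : Type} (M : KripkeModel P)
    (hwf : ∀ s : Set M.W, s.Nonempty → ∃ w ∈ s, ∀ v ∈ s, M.R v w → v = w)
    (t : Set M.W) : t ⊆ M.upset (mins M t) := by
  intro w hw
  obtain ⟨m, hm, hr⟩ := cover M hwf t w hw
  exact ⟨m, hm, hr⟩

theorem upset_mins_eq {P : Type} (M : KripkeModel P)
    (hwf : ∀ s : Set M.W, s.Nonempty → ∃ w ∈ s, ∀ v ∈ s, M.R v w → v = w)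
    (t : Set M.W) : M.upset (mins M t) = M.upset t := by
  apply Set.Subset.antisymm (upset_mono M (mins_subset M t))
  rintro v ⟨w, hw, hr⟩
  obtain ⟨m, hm, hmw⟩ := cover M hwf t w hw
  exact ⟨m, hm, M.trans m w v hmw hr⟩

theorem mins_inter_upset {P : Type} (M : KripkeModel P) (t t₁ : Set M.W)
    (h1 : t₁ ⊆ mins M t) : mins M (t ∩ M.upset t₁) = t₁ := by
  ext w
  constructor
  · rintro ⟨⟨hwt, m, hm, hmw⟩, hmin⟩
    have hms : m ∈ t ∩ M.upset t₁ := ⟨(h1 hm).1, m, hm, M.refl m⟩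
    rw [← hmin m hms hmw]; exact hm
  · intro hw
    refine ⟨⟨(h1 hw).1, w, hw, M.refl w⟩, ?_⟩
    intro v hv hr
    exact (h1 hw).2 v hv.1 hr

theorem main {P : Type} (M : KripkeModel P)
    (hwf : ∀ s : Set M.W, s.Nonempty → ∃ w ∈ s, ∀ v ∈ s, M.R v w → v = w)
    (φ : Formula P) : ∀ t : Set M.W, support M φ t ↔ support M φ (mins M t) := by
  induction φ with
  | atom p =>
      intro t
      refine ⟨fun h => support_mono M _ t _ (mins_subset M t) h, fun h w hw => ?_⟩
      obtain ⟨m, hm, hr⟩ := cover M hwf t w hw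
      exact M.persistent m w p hr (h m hm)
  | bot =>
      intro t
      refine ⟨fun h => support_mono M _ t _ (mins_subset M t) h, fun h => ?_⟩
      by_contra ht
      obtain ⟨m, hm, hmin⟩ := hwf t (Set.nonempty_iff_ne_empty.mpr ht)
      exact absurd h (by intro he; exact (Set.eq_empty_iff_forall_notMem.mp he m) ⟨hm, hmin⟩)
  | and φ ψ ihφ ihψ =>
      intro t
      exact and_congr (ihφ t) (ihψ t)
  | or φ ψ ihφ ihψ =>
      intro t
      refine ⟨fun h => support_mono M _ t _ (mins_subset M t) h, ?_⟩
      rintro ⟨t₁, t₂, he, h1, h2⟩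
      have h1' : t₁ ⊆ mins M t := he ▸ Set.subset_union_left
      have h2' : t₂ ⊆ mins M t := he ▸ Set.subset_union_right
      refine ⟨t ∩ M.upset t₁, t ∩ M.upset t₂, ?_, ?_, ?_⟩
      · apply Set.Subset.antisymm
        · intro w hw
          have := subset_upset_mins M hwf t hw
          rw [he] at this
          obtain ⟨m, hm, hr⟩ := this
          rcases hm with hm | hm
          · exact Or.inl ⟨hw, m, hm, hr⟩
          · exact Or.inr ⟨hw, m, hm, hr⟩
        · rintro w (hw | hw) <;> exact hw.1
      · rw [ihφ, mins_inter_upset M t t₁ h1']; exact h1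
      · rw [ihψ, mins_inter_upset M t t₂ h2']; exact h2
  | impl φ ψ ihφ ihψ =>
      intro t
      constructor
      · intro h t' ht' hφ
        rw [upset_mins_eq M hwf] at ht'
        exact h t' ht' hφ
      · intro h t' ht' hφ
        rw [← upset_mins_eq M hwf] at ht'
        exact h t' ht' hφ
  | iorr φ ψ ihφ ihψ =>
      intro t
      exact or_congr (ihφ t) (ihψ t)

/-- minimal-set property for well-founded R. -/
theorem minimal_set_property {P : Type} (M : KripkeModel P)
    (hwf : ∀ s : Set M.W, s.Nonempty → ∃ w ∈ s, ∀ v ∈ s, M.R v w → v = w)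
    (t : Set M.W) (φ : Formula P) :
    support M φ t ↔ support M φ {w | w ∈ t ∧ ∀ v ∈ t, M.R v w → v = w} := main M hwf φ t
end

section
/- Conservativity over intuitionistic logic: for any set Φ∪{ψ} of standard formulas, Φ entails ψ in InqI (every team of every intuitionistic Kripke model supporting all formulas in Φ supports ψ) if and only if Φ entails ψ in intuitionistic Kripke semantics (every world of every intuitionistic Kripke model at which all formulas in Φ are true makes ψ true). -/
lemma support_empty {P : Type} (M : KripkeModel P) : ∀ φ : Formula P, support M φ (∅ : Set M.W) := by
  intro φ
  induction φ with
  | atom p => intro w hw; exact absurd hw (Set.notMem_empty w)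
  | bot => rfl
  | and φ ψ ihφ ihψ => exact ⟨ihφ, ihψ⟩
  | or φ ψ ihφ ihψ => exact ⟨∅, ∅, by simp, ihφ, ihψ⟩
  | impl φ ψ ihφ ihψ =>
      intro t' ht' _
      have : t' = ∅ := by
        apply Set.eq_empty_of_subset_empty
        intro v hv
        obtain ⟨w, hw, _⟩ := ht' hv
        exact absurd hw (Set.notMem_empty w)
      rw [this]; exact ihψ
  | iorr φ ψ ihφ ihψ => exact Or.inl ihφ

lemma standard_flat {P : Type} (φ : Formula P) (hs : φ.standard) (M : KripkeModel P)
    (t : Set M.W) : support M φ t ↔ ∀ w ∈ t, support M φ {w} := by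
  induction φ generalizing t with
  | atom p =>
      constructor
      · intro h w hw v hv; rw [Set.mem_singleton_iff] at hv; subst hv; exact h _ hw
      · intro h w hw; exact h w hw w rfl
  | bot =>
      constructor
      · intro h w hw; rw [h] at hw; exact absurd hw (Set.notMem_empty w)
      · intro h
        apply Set.eq_empty_of_forall_notMem
        intro w hw
        have := h w hw
        exact Set.singleton_ne_empty w this
  | and φ ψ ihφ ihψ =>
      obtain ⟨h1, h2⟩ := hs
      constructor
      · rintro ⟨hφ, hψ⟩ w hw
        exact ⟨(ihφ h1 t).mp hφ w hw, (ihψ h2 t).mp hψ w hw⟩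
      · intro h
        exact ⟨(ihφ h1 t).mpr (fun w hw => (h w hw).1),
               (ihψ h2 t).mpr (fun w hw => (h w hw).2)⟩
  | or φ ψ ihφ ihψ =>
      obtain ⟨h1, h2⟩ := hs
      constructor
      · rintro ⟨t₁, t₂, hunion, hφ, hψ⟩ w hw
        rw [hunion] at hw
        cases hw with
        | inl h => exact ⟨{w}, ∅, by simp, (ihφ h1 t₁).mp hφ w h, support_empty M ψ⟩
        | inr h => exact ⟨∅, {w}, by simp, support_empty M φ, (ihψ h2 t₂).mp hψ w h⟩
      · intro h
        refine ⟨{w ∈ t | support M φ {w}}, {w ∈ t | ¬ support M φ {w}}, ?_, ?_, ?_⟩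
        · ext w; simp only [Set.mem_union, Set.mem_setOf_eq]; tauto
        · exact (ihφ h1 _).mpr (fun w hw => hw.2)
        · apply (ihψ h2 _).mpr
          intro w hw
          obtain ⟨t₁, t₂, hu, hφ', hψ'⟩ := h w hw.1
          rcases (show w ∈ t₁ ∪ t₂ from hu ▸ rfl) with hm | hm
          · exfalso
            apply hw.2
            have ht1 : t₁ = {w} := by
              apply Set.Subset.antisymm
              · rw [hu]; exact Set.subset_union_left
              · exact Set.singleton_subset_iff.mpr hm
            rw [← ht1]; exact hφ'
          · have ht2 : t₂ ⊆ {w} := by rw [hu]; exact Set.subset_union_right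
            have ht2' : t₂ = {w} := Set.Subset.antisymm ht2 (Set.singleton_subset_iff.mpr hm)
            rw [← ht2']; exact hψ'
  | impl φ ψ ihφ ihψ =>
      obtain ⟨h1, h2⟩ := hs
      constructor
      · intro h w hw t' ht' hφ'
        apply h t' ?_ hφ'
        intro v hv
        obtain ⟨u, hu, hr⟩ := ht' hv
        rw [Set.mem_singleton_iff] at hu; subst hu
        exact ⟨u, hw, hr⟩
      · intro h t' ht' hφ'
        apply (ihψ h2 t').mpr
        intro v hv
        obtain ⟨w, hw, hr⟩ := ht' hv
        apply h w hw {v}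
        · intro u hu; rw [Set.mem_singleton_iff] at hu; subst hu
          exact ⟨w, rfl, hr⟩
        · exact (ihφ h1 t').mp hφ' v hv
  | iorr φ ψ ihφ ihψ => exact absurd hs id

/-- conservativity over intuitionistic logic: for standard formulas,
InqI entailment coincides with entailment in intuitionistic Kripke semantics. -/
theorem conservativity_over_IPL {P : Type} (Φ : Set (Formula P)) (ψ : Formula P)
    (hΦ : ∀ φ ∈ Φ, φ.standard) (hψ : ψ.standard) :
    (∀ (M : KripkeModel P) (t : Set M.W),
        (∀ φ ∈ Φ, support M φ t) → support M ψ t) ↔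
    (∀ (M : KripkeModel P) (w : M.W),
        (∀ φ ∈ Φ, truth M w φ) → truth M w ψ) := by
  constructor
  · intro h M w hw
    exact h M {w} hw
  · intro h M t ht
    apply (standard_flat ψ hψ M t).mpr
    intro w hw
    apply h M w
    intro φ hφ
    exact (standard_flat φ (hΦ φ hφ) M t).mp (ht φ hφ) w hw
end
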